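/- Suppose k ≤ f(k) ≤ k+1 for all 0 ≤ k ≤ K. Then for all 2 ≤ ℓ ≤ K+1 and all k ≤ ℓ-2, h(k+1,ℓ) - h(k,ℓ) ≥ 0; i.e., k ↦ h(k,ℓ) is nondecreasing on {0,...,ℓ-1}. -/

import Mathlib

open Finset

/-- `ChainLaw f p` says that `p ℓ k = P(X_ℓ = k)` is the law of the Markov chain
`(X_ℓ)_{ℓ ≥ 1}` with `X_1 = 0` and time-inhomogeneous transitions: from state
`i` at time `n`, move to `i+1` with probability `f i/(n+1)`, return to `0` with
probability `1/(n+1)` if `i ≥ 1` (so that it stays at `i` with probability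
`(n - f i)/(n+1)`), and, from `i = 0`, move to `1` with probability `f 0/(n+1)`
and stay at `0` otherwise.  (The chain has total mass one, so the probability
of being at `0` at time `n+1` is
`p n 0 (n+1-f 0)/(n+1) + (∑_{i ≥ 1} p n i)/(n+1) = p n 0 (n+1-f 0)/(n+1) + (1 - p n 0)/(n+1)`.) -/
def ChainLaw (f : ℕ → ℝ) (p : ℕ → ℕ → ℝ) : Prop :=
  (∀ k, p 1 k = if k = 0 then 1 else 0) ∧
  (∀ n, 1 ≤ n →
    p (n + 1) 0 = p n 0 * (((n : ℝ) + 1 - f 0) / ((n : ℝ) + 1))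
      + (1 - p n 0) * (1 / ((n : ℝ) + 1))) ∧
  (∀ n, 1 ≤ n → ∀ j, 1 ≤ j →
    p (n + 1) j = p n (j - 1) * (f (j - 1) / ((n : ℝ) + 1))
      + p n j * (((n : ℝ) - f j) / ((n : ℝ) + 1)))

/-- `Hk f p k ℓ = f k P(X_ℓ = k) - P(X_ℓ ≥ k+1)`; since `X_ℓ ≤ ℓ - 1` a.s.,
`P(X_ℓ ≥ k+1) = ∑_{j=k+1}^{ℓ-1} p ℓ j`. -/
def Hk (f : ℕ → ℝ) (p : ℕ → ℕ → ℝ) (k ℓ : ℕ) : ℝ :=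
  f k * p ℓ k - ∑ j ∈ Finset.Ico (k + 1) ℓ, p ℓ j

section Aux

variable {f : ℕ → ℝ} {p : ℕ → ℕ → ℝ}

lemma p_support (hp : ChainLaw f p) : ∀ n, 1 ≤ n → ∀ j, n ≤ j → p n j = 0 := by
  intro n hn
  induction n, hn using Nat.le_induction with
  | base => intro j hj; rw [hp.1 j, if_neg (by omega)]
  | succ m hm ih =>
    intro j hj
    rw [hp.2.2 m hm j (by omega), ih (j-1) (by omega), ih j (by omega)]
    ring

lemma step_mul (hp : ChainLaw f p) {n : ℕ} (hn : 1 ≤ n) {j : ℕ} (hj : 1 ≤ j) :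
    ((n:ℝ)+1) * p (n+1) j = f (j-1) * p n (j-1) + ((n:ℝ) - f j) * p n j := by
  rw [hp.2.2 n hn j hj]
  have h : ((n:ℝ)+1) ≠ 0 := by positivity
  field_simp

lemma tail_rec (hp : ChainLaw f p) {n : ℕ} (hn : 1 ≤ n) {k : ℕ} (hk : k ≤ n) :
    ((n:ℝ)+1) * ∑ j ∈ Ico (k+1) (n+1), p (n+1) j
      = f k * p n k + (n:ℝ) * ∑ j ∈ Ico (k+1) n, p n j := by
  rcases eq_or_lt_of_le hk with rfl | hkn
  · rw [p_support hp k hn k le_rfl]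
    simp
  · rw [Finset.mul_sum]
    rw [Finset.sum_congr rfl (fun j hj => by
      simp only [mem_Ico] at hj
      exact step_mul hp hn (by omega : 1 ≤ j))]
    rw [Finset.sum_add_distrib]
    have hA : ∑ j ∈ Ico (k+1) (n+1), f (j-1) * p n (j-1)
        = f k * p n k + ∑ j ∈ Ico (k+1) n, f j * p n j := by
      have hA1 : ∑ j ∈ Ico (k+1) (n+1), f (j-1) * p n (j-1)
          = ∑ i ∈ Ico k n, f i * p n i := by
        rw [Finset.sum_Ico_eq_sum_range, Finset.sum_Ico_eq_sum_range]
        rw [show n + 1 - (k+1) = n - k by omega]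
        exact Finset.sum_congr rfl (fun i _ => by rw [show k+1+i-1 = k+i by omega])
      rw [hA1]
      exact Finset.sum_eq_sum_Ico_succ_bot hkn _
    have hB : ∑ j ∈ Ico (k+1) (n+1), ((n:ℝ) - f j) * p n j
        = ∑ j ∈ Ico (k+1) n, ((n:ℝ) - f j) * p n j := by
      rw [Finset.sum_Ico_succ_top (by omega : k+1 ≤ n), p_support hp n hn n le_rfl]
      ring
    rw [hA, hB, add_assoc, ← Finset.sum_add_distrib, Finset.mul_sum]
    rw [Finset.sum_congr rfl (fun j _ => by ring : ∀ j ∈ Ico (k+1) n,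
      f j * p n j + ((n:ℝ) - f j) * p n j = (n:ℝ) * p n j)]

lemma tail_split (hp : ChainLaw f p) {n : ℕ} (hn : 1 ≤ n) {k : ℕ} (hk : k + 1 ≤ n) :
    ∑ j ∈ Ico (k+1) n, p n j = p n (k+1) + ∑ j ∈ Ico (k+1+1) n, p n j := by
  rcases eq_or_lt_of_le hk with h | h
  · rw [p_support hp n hn (k+1) (le_of_eq h.symm)]
    rw [show Ico (k+1) n = ∅ from Finset.Ico_eq_empty (by omega)]
    rw [show Ico (k+1+1) n = ∅ from Finset.Ico_eq_empty (by omega)]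
    simp
  · exact Finset.sum_eq_sum_Ico_succ_bot h _

lemma Hk_rec (hp : ChainLaw f p) {n : ℕ} (hn : 1 ≤ n) {k : ℕ} (hk : k < n) :
    ((n:ℝ)+1) * Hk f p (k+1) (n+1)
      = f (k+1) * Hk f p k n + ((n:ℝ) - f (k+1)) * Hk f p (k+1) n := by
  have h1 : ((n:ℝ)+1) * p (n+1) (k+1) = f k * p n k + ((n:ℝ) - f (k+1)) * p n (k+1) := by
    have := step_mul hp hn (by omega : 1 ≤ k+1)
    simpa using this
  have h2 : ((n:ℝ)+1) * ∑ j ∈ Ico (k+1+1) (n+1), p (n+1) j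
      = f (k+1) * p n (k+1) + (n:ℝ) * ∑ j ∈ Ico (k+1+1) n, p n j :=
    tail_rec hp hn (by omega)
  have h3 := tail_split hp hn (by omega : k + 1 ≤ n)
  simp only [Hk]
  linear_combination f (k+1) * h1 - h2 + f (k+1) * h3

lemma p_mass (hp : ChainLaw f p) : ∀ n, 1 ≤ n → ∑ j ∈ Finset.range n, p n j = 1 := by
  intro n hn
  induction n, hn using Nat.le_induction with
  | base => simp [hp.1]
  | succ m hm ih =>
    have hne : ((m:ℝ)+1) ≠ 0 := by positivity
    have h0 : ∑ j ∈ Finset.range (m+1), p (m+1) j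
        = p (m+1) 0 + ∑ j ∈ Ico 1 (m+1), p (m+1) j := by
      rw [Finset.range_eq_Ico]
      exact Finset.sum_eq_sum_Ico_succ_bot (by omega) _
    have h2 : ((m:ℝ)+1) * ∑ j ∈ Ico 1 (m+1), p (m+1) j
        = f 0 * p m 0 + (m:ℝ) * ∑ j ∈ Ico 1 m, p m j :=
      tail_rec hp hm (Nat.zero_le m)
    have hM : ∑ j ∈ Ico 1 m, p m j = 1 - p m 0 := by
      have h : ∑ j ∈ Finset.range m, p m j = p m 0 + ∑ j ∈ Ico 1 m, p m j := by
        rw [Finset.range_eq_Ico]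
        exact Finset.sum_eq_sum_Ico_succ_bot (by omega) _
      rw [ih] at h; linarith
    rw [hM] at h2
    have h1 : ((m:ℝ)+1) * p (m+1) 0 = p m 0 * ((m:ℝ)+1 - f 0) + (1 - p m 0) := by
      rw [hp.2.1 m hm]
      field_simp
    have hgoal : ((m:ℝ)+1) * ∑ j ∈ Finset.range (m+1), p (m+1) j = ((m:ℝ)+1) * 1 := by
      rw [h0]
      linear_combination h1 + h2
    exact mul_left_cancel₀ hne hgoal

lemma p_nonneg (hp : ChainLaw f p) (hfpos : ∀ k, 0 < f k) (hfle : ∀ k, f k ≤ (k:ℝ)+1) :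
    ∀ n, 1 ≤ n → ∀ j, 0 ≤ p n j := by
  intro n hn
  induction n, hn using Nat.le_induction with
  | base => intro j; rw [hp.1 j]; split <;> norm_num
  | succ m hm ih =>
    intro j
    rcases Nat.eq_zero_or_pos j with rfl | hj
    · rw [hp.2.1 m hm]
      have h1 : p m 0 ≤ 1 := by
        rw [← p_mass hp m hm]
        exact Finset.single_le_sum (fun i _ => ih i) (Finset.mem_range.2 (by omega))
      have h2 : f 0 ≤ 1 := by have h := hfle 0; push_cast at h; linarith
      have h3 : (0:ℝ) ≤ (m:ℝ) := Nat.cast_nonneg m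
      apply add_nonneg
      · exact mul_nonneg (ih 0) (div_nonneg (by linarith) (by linarith))
      · exact mul_nonneg (by linarith) (by positivity)
    · rcases le_or_gt (m+1) j with hjm | hjm
      · rw [p_support hp (m+1) (by omega) j hjm]
      · rw [hp.2.2 m hm j hj]
        rcases eq_or_lt_of_le (by omega : j ≤ m) with he | hjm2
        · rw [he, p_support hp m hm m le_rfl]
          have hterm : 0 ≤ p m (m-1) * (f (m-1) / ((m:ℝ)+1)) :=
            mul_nonneg (ih _) (div_nonneg (le_of_lt (hfpos _)) (by positivity))
          simp only [zero_mul, add_zero]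
          exact hterm
        · have hcast : ((j:ℝ)+1) ≤ (m:ℝ) := by exact_mod_cast Nat.succ_le_of_lt hjm2
          have hfj : f j ≤ (m:ℝ) := by linarith [hfle j]
          apply add_nonneg
          · exact mul_nonneg (ih _) (div_nonneg (le_of_lt (hfpos _)) (by positivity))
          · exact mul_nonneg (ih _) (div_nonneg (by linarith) (by positivity))

lemma Hk_zero_rec (hp : ChainLaw f p) {n : ℕ} (hn : 1 ≤ n) :
    ((n:ℝ)+1) * Hk f p 0 (n+1) = ((n:ℝ) - f 0) * Hk f p 0 n := by
  have hM : ∑ j ∈ Ico 1 n, p n j = 1 - p n 0 := by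
    have h : ∑ j ∈ Finset.range n, p n j = p n 0 + ∑ j ∈ Ico 1 n, p n j := by
      rw [Finset.range_eq_Ico]
      exact Finset.sum_eq_sum_Ico_succ_bot (by omega) _
    rw [p_mass hp n hn] at h; linarith
  have h2 : ((n:ℝ)+1) * ∑ j ∈ Ico 1 (n+1), p (n+1) j
      = f 0 * p n 0 + (n:ℝ) * ∑ j ∈ Ico 1 n, p n j :=
    tail_rec hp hn (Nat.zero_le n)
  have h1 : ((n:ℝ)+1) * p (n+1) 0 = p n 0 * ((n:ℝ)+1 - f 0) + (1 - p n 0) := by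
    rw [hp.2.1 n hn]
    field_simp
  simp only [Hk, zero_add]
  linear_combination f 0 * h1 - h2 - f 0 * hM

lemma Hk_zero_nonneg (hp : ChainLaw f p) (hfpos : ∀ k, 0 < f k)
    (hfle : ∀ k, f k ≤ (k:ℝ)+1) : ∀ n, 1 ≤ n → 0 ≤ Hk f p 0 n := by
  intro n hn
  induction n, hn using Nat.le_induction with
  | base =>
    simp only [Hk, hp.1, zero_add, Finset.Ico_self, Finset.sum_empty]
    norm_num
    exact le_of_lt (hfpos 0)
  | succ m hm ih =>
    have h := Hk_zero_rec hp hm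
    have h2 : f 0 ≤ 1 := by have h := hfle 0; push_cast at h; linarith
    have h3 : (1:ℝ) ≤ (m:ℝ) := by exact_mod_cast hm
    have hpos : (0:ℝ) < (m:ℝ)+1 := by positivity
    nlinarith [mul_nonneg (by linarith : (0:ℝ) ≤ (m:ℝ) - f 0) ih]

lemma Hk_diag (hp : ChainLaw f p) {n : ℕ} (hn : 1 ≤ n) : Hk f p n n = 0 := by
  simp [Hk, p_support hp n hn n le_rfl]

end Aux

/-- if `k ≤ f k ≤ k+1` for all `k ≤ K`, then for every
`2 ≤ ℓ ≤ K+1` the map `k ↦ h(k,ℓ)` is nondecreasing on `{0, …, ℓ-1}`: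
`h(k+1,ℓ) - h(k,ℓ) ≥ 0` for all `k ≤ ℓ-2`. -/
theorem Hk_monotone (f : ℕ → ℝ) (hfpos : ∀ k, 0 < f k)
    (hfle : ∀ k, f k ≤ (k : ℝ) + 1) (p : ℕ → ℕ → ℝ) (hp : ChainLaw f p)
    (K : ℕ) (hK : ∀ k, k ≤ K → (k : ℝ) ≤ f k ∧ f k ≤ (k : ℝ) + 1) :
    ∀ ℓ, 2 ≤ ℓ → ℓ ≤ K + 1 → ∀ k, k ≤ ℓ - 2 →
      0 ≤ Hk f p (k + 1) ℓ - Hk f p k ℓ := by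
  intro ℓ hℓ
  induction ℓ, hℓ using Nat.le_induction with
  | base =>
    intro hK2 k hk
    have hk0 : k = 0 := by omega
    subst hk0
    have hp20 : p 2 0 = (2 - f 0) / 2 := by
      have h := hp.2.1 1 le_rfl
      rw [hp.1 0, if_pos rfl] at h
      push_cast at h
      rw [h]; ring
    have hp21 : p 2 1 = f 0 / 2 := by
      have h := hp.2.2 1 le_rfl 1 le_rfl
      rw [hp.1 0, if_pos rfl, hp.1 1, if_neg (by omega)] at h
      push_cast at h
      rw [h]; ring
    have hf1 : (1:ℝ) ≤ f 1 := by
      have h := (hK 1 (by omega)).1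
      push_cast at h; linarith
    have hf0 : 0 < f 0 := hfpos 0
    show 0 ≤ Hk f p 1 2 - Hk f p 0 2
    simp only [Hk]
    rw [show Finset.Ico (1+1) 2 = ∅ from Finset.Ico_eq_empty (by omega)]
    rw [show Finset.Ico (0+1) 2 = {1} by decide]
    rw [Finset.sum_empty, Finset.sum_singleton, hp20, hp21]
    nlinarith
  | succ n hn ih =>
    intro hK2 k hk
    have hnK : n ≤ K := by omega
    have hihall : ∀ k', k' ≤ n - 2 → 0 ≤ Hk f p (k'+1) n - Hk f p k' n :=
      ih (by omega)
    have hn1 : 1 ≤ n := by omega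
    have hnpos : (0:ℝ) < (n:ℝ)+1 := by positivity
    rcases Nat.eq_zero_or_pos k with rfl | hkpos
    · -- k = 0
      have h1 : ((n:ℝ)+1) * Hk f p 1 (n+1)
          = f 1 * Hk f p 0 n + ((n:ℝ) - f 1) * Hk f p 1 n :=
        Hk_rec hp hn1 (by omega : 0 < n)
      have h0 := Hk_zero_rec hp hn1
      have h2n : (2:ℝ) ≤ (n:ℝ) := by exact_mod_cast hn
      have hf1le : f 1 ≤ (n:ℝ) := by
        have h := hfle 1; push_cast at h; linarith
      have hD0 : 0 ≤ Hk f p 1 n - Hk f p 0 n := hihall 0 (by omega)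
      have hh0 : 0 ≤ Hk f p 0 n := Hk_zero_nonneg hp hfpos hfle n hn1
      have key : ((n:ℝ)+1) * (Hk f p 1 (n+1) - Hk f p 0 (n+1))
          = ((n:ℝ) - f 1) * (Hk f p 1 n - Hk f p 0 n) + f 0 * Hk f p 0 n := by
        linear_combination h1 - h0
      show 0 ≤ Hk f p 1 (n+1) - Hk f p 0 (n+1)
      nlinarith [mul_nonneg (by linarith : (0:ℝ) ≤ (n:ℝ) - f 1) hD0,
        mul_nonneg (le_of_lt (hfpos 0)) hh0]
    · obtain ⟨m, rfl⟩ : ∃ m, k = m + 1 := ⟨k - 1, by omega⟩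
      rcases lt_or_ge (m + 1) (n - 1) with hint | hbd
      · -- interior case: m+1 ≤ n-2
        have e1 : ((n:ℝ)+1) * Hk f p (m+1+1) (n+1)
            = f (m+1+1) * Hk f p (m+1) n + ((n:ℝ) - f (m+1+1)) * Hk f p (m+1+1) n :=
          Hk_rec hp hn1 (by omega : m+1 < n)
        have e2 : ((n:ℝ)+1) * Hk f p (m+1) (n+1)
            = f (m+1) * Hk f p m n + ((n:ℝ) - f (m+1)) * Hk f p (m+1) n :=
          Hk_rec hp hn1 (by omega : m < n)
        have hD1 : 0 ≤ Hk f p (m+1+1) n - Hk f p (m+1) n := hihall (m+1) (by omega)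
        have hD2 : 0 ≤ Hk f p (m+1) n - Hk f p m n := hihall m (by omega)
        have hcast : ((m:ℝ)+3) ≤ (n:ℝ) := by
          have h : (m+3 : ℕ) ≤ n := by omega
          exact_mod_cast h
        have hfk : f (m+1+1) ≤ (n:ℝ) := by
          have h := hfle (m+1+1); push_cast at h; linarith
        have key : ((n:ℝ)+1) * (Hk f p (m+1+1) (n+1) - Hk f p (m+1) (n+1))
            = ((n:ℝ) - f (m+1+1)) * (Hk f p (m+1+1) n - Hk f p (m+1) n)
              + f (m+1) * (Hk f p (m+1) n - Hk f p m n) := by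
          linear_combination e1 - e2
        nlinarith [mul_nonneg (by linarith : (0:ℝ) ≤ (n:ℝ) - f (m+1+1)) hD1,
          mul_nonneg (le_of_lt (hfpos (m+1))) hD2]
      · -- boundary case: m+1 = n-1
        have hnm : n = m + 2 := by omega
        subst hnm
        have e1 : (((m:ℝ)+2)+1) * Hk f p (m+1+1) (m+2+1)
            = f (m+1+1) * Hk f p (m+1) (m+2)
              + (((m:ℝ)+2) - f (m+1+1)) * Hk f p (m+1+1) (m+2) := by
          have h := Hk_rec hp hn1 (by omega : m+1 < m+2)
          push_cast at h
          convert h using 2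
        have e2 : (((m:ℝ)+2)+1) * Hk f p (m+1) (m+2+1)
            = f (m+1) * Hk f p m (m+2)
              + (((m:ℝ)+2) - f (m+1)) * Hk f p (m+1) (m+2) := by
          have h := Hk_rec hp hn1 (by omega : m < m+2)
          push_cast at h
          convert h using 2
        have hd : Hk f p (m+1+1) (m+2) = 0 := Hk_diag hp (by omega)
        have hD2 : 0 ≤ Hk f p (m+1) (m+2) - Hk f p m (m+2) := hihall m (by omega)
        have hfn : ((m:ℝ)+2) ≤ f (m+1+1) := by
          have h := (hK (m+2) (by omega)).1
          push_cast at h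
          have : f (m+1+1) = f (m+2) := by norm_num
          rw [this]; linarith
        have hhb : 0 ≤ Hk f p (m+1) (m+2) := by
          simp only [Hk]
          rw [show Finset.Ico (m+1+1) (m+2) = ∅ from Finset.Ico_eq_empty (by omega)]
          rw [Finset.sum_empty]
          have hpn := p_nonneg hp hfpos hfle (m+2) (by omega) (m+1)
          have hfp := le_of_lt (hfpos (m+1))
          nlinarith
        have key : (((m:ℝ)+2)+1) * (Hk f p (m+1+1) (m+2+1) - Hk f p (m+1) (m+2+1))
            = (f (m+1+1) - ((m:ℝ)+2)) * Hk f p (m+1) (m+2)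
              + f (m+1) * (Hk f p (m+1) (m+2) - Hk f p m (m+2)) := by
          linear_combination e1 - e2 + (((m:ℝ)+2) - f (m+1+1)) * hd
        have hmpos : (0:ℝ) < ((m:ℝ)+2)+1 := by positivity
        nlinarith [mul_nonneg (by linarith : (0:ℝ) ≤ f (m+1+1) - ((m:ℝ)+2)) hhb,
          mul_nonneg (le_of_lt (hfpos (m+1))) hD2]
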